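/- Let (R, F) be a pair of relations on P₂(X) and define R^lca := R ∪ {(ab, ab) : ab ∈ supp_F}. Then a DAG G RF^lca-realizes (R, F) if and only if G RF-realizes (R^lca, F). -/

import Mathlib

section Preamble

variable {V : Type*}

/-- `v` is an ancestor-acyclicity condition: no directed cycle through any vertex. -/
def dagAcyclic (E : V → V → Prop) : Prop := ∀ v, ¬ Relation.TransGen E v v

/-- A leaf is a vertex with out-degree zero. -/
def dagLeaf (E : V → V → Prop) (v : V) : Prop := ∀ w, ¬ E v w

/-- A root is a vertex with in-degree zero. -/
def dagRoot (E : V → V → Prop) (v : V) : Prop := ∀ w, ¬ E w v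

/-- `v` is a common ancestor of the set `A`. -/
def commonAnc (E : V → V → Prop) (A : Set V) (v : V) : Prop :=
  ∀ a ∈ A, Relation.ReflTransGen E v a

/-- The set of least common ancestors of `A`: minimal common ancestors. -/
def LCAset (E : V → V → Prop) (A : Set V) : Set V :=
  {v | commonAnc E A v ∧ ∀ w, Relation.TransGen E v w → ¬ commonAnc E A w}

/-- `v` is the unique least common ancestor of the (unordered) pair `p`. -/
def lcaIs (E : V → V → Prop) (p : Sym2 V) (v : V) : Prop :=
  LCAset E {x | x ∈ p} = {v}

/-- The LCA of `p` is well-defined. -/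
def lcaDef (E : V → V → Prop) (p : Sym2 V) : Prop := ∃ v, lcaIs E p v

/-- Transitive closure of a relation given as a set of pairs. -/
def tcS {α : Type*} (R : Set (α × α)) : Set (α × α) :=
  {pq | Relation.TransGen (fun a b => (a, b) ∈ R) pq.1 pq.2}

/-- The support of a relation. -/
def suppS {α : Type*} (R : Set (α × α)) : Set α :=
  {p | ∃ q, (p, q) ∈ R ∨ (q, p) ∈ R}

/-- Transitivity for a set-relation. -/
def isTransS {α : Type*} (S : Set (α × α)) : Prop :=
  ∀ p q r, (p, q) ∈ S → (q, r) ∈ S → (p, r) ∈ S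

/-- `F`-conditional symmetry. -/
def fcsym {α : Type*} (F S : Set (α × α)) : Prop :=
  ∀ p q, (p, q) ∈ F → (p, q) ∈ S → (q, p) ∈ S

/-- Extended support: the support together with all singleton pairs `xx`, `x ∈ X`. -/
def suppPlus (X : Set V) (R : Set (Sym2 V × Sym2 V)) : Set (Sym2 V) :=
  suppS R ∪ {p | ∃ x ∈ X, p = Sym2.diag x}

/-- Cross-consistency. -/
def crossCons (S : Set (Sym2 V × Sym2 V)) : Prop :=
  ∀ a b c d x y : V, s(a, b) ∈ suppS S → (s(a, c), s(x, y)) ∈ S → (s(b, d), s(x, y)) ∈ S →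
    (s(a, b), s(x, y)) ∈ S

/-- The closure `cl_F(R)`: smallest `supp⁺_R`-reflexive, transitive, cross-consistent,
`F`-conditionally-symmetric relation containing `R`. -/
def clF (X : Set V) (F R : Set (Sym2 V × Sym2 V)) : Set (Sym2 V × Sym2 V) :=
  ⋂₀ {S | R ⊆ S ∧ (∀ p ∈ suppPlus X R, (p, p) ∈ S) ∧ isTransS S ∧ crossCons S ∧ fcsym F S}

/-- A relation is on `P₂(X)`: all members of its pairs are taxa from `X`. -/
def onP2 (X : Set V) (R : Set (Sym2 V × Sym2 V)) : Prop :=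
  ∀ pq ∈ R, (∀ z ∈ pq.1, z ∈ X) ∧ (∀ z ∈ pq.2, z ∈ X)

/-- `G` realizes `R` (conditions I1 and I2, with all LCAs on `supp⁺_R` well-defined). -/
def realizes (E : V → V → Prop) (X : Set V) (R : Set (Sym2 V × Sym2 V)) : Prop :=
  (∀ p ∈ suppPlus X R, lcaDef E p) ∧
  ∀ p q, (p, q) ∈ R →
    ((q, p) ∉ tcS R → ∃ u v, lcaIs E p u ∧ lcaIs E q v ∧ Relation.TransGen E v u) ∧
    ((q, p) ∈ tcS R → ∃ u, lcaIs E p u ∧ lcaIs E q u)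

/-- Condition (F): no forbidden strict LCA relationship is displayed. -/
def condF (E : V → V → Prop) (F : Set (Sym2 V × Sym2 V)) : Prop :=
  ∀ p q, (p, q) ∈ F → ∀ u v, lcaIs E p u → lcaIs E q v → ¬ Relation.TransGen E v u

/-- `G` RF-realizes the pair `(R, F)`. -/
def rfRealizes (E : V → V → Prop) (X : Set V) (R F : Set (Sym2 V × Sym2 V)) : Prop :=
  realizes E X R ∧ condF E F

end Preamble

/-- Condition (F^lca): for all `(ab,cd) ∈ F`, both LCAs are well-defined and
`lca(ab)` is not a proper descendant of `lca(cd)`. -/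
def condFlca {V : Type*} (E : V → V → Prop) (F : Set (Sym2 V × Sym2 V)) : Prop :=
  ∀ p q, (p, q) ∈ F → lcaDef E p ∧ lcaDef E q ∧
    ∀ u v, lcaIs E p u → lcaIs E q v → ¬ Relation.TransGen E v u

/-- with `R^lca := R ∪ {(ab,ab) : ab ∈ supp_F}`, a DAG `G`
RF^lca-realizes `(R, F)` iff `G` RF-realizes `(R^lca, F)`. -/
theorem stmt15 {V : Type*} [Finite V] (E : V → V → Prop) (X : Set V)
    (hacyc : dagAcyclic E) (hX : ∀ v, v ∈ X ↔ dagLeaf E v)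
    (R F : Set (Sym2 V × Sym2 V)) (hR : onP2 X R) (hF : onP2 X F) :
    (realizes E X R ∧ condFlca E F) ↔
      rfRealizes E X (R ∪ {pq : Sym2 V × Sym2 V | pq.1 = pq.2 ∧ pq.1 ∈ suppS F}) F := by
  
  set Rl := R ∪ {pq : Sym2 V × Sym2 V | pq.1 = pq.2 ∧ pq.1 ∈ suppS F} with hRl
  -- support facts
  have hsuppF : suppS F ⊆ suppS Rl := by
    intro p hp
    exact ⟨p, Or.inl (Or.inr ⟨rfl, hp⟩)⟩
  have hsuppR : suppS R ⊆ suppS Rl := by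
    rintro p ⟨q, hq⟩
    exact ⟨q, by tauto⟩
  have hsuppPlus : suppPlus X R ⊆ suppPlus X Rl := by
    rintro p (hp | hp)
    · exact Or.inl (hsuppR hp)
    · exact Or.inr hp
  have hsuppPlus' : suppPlus X Rl ⊆ suppPlus X R ∪ suppS F := by
    rintro p (⟨q, (h | h) | (h | h)⟩ | hp)
    · exact Or.inl (Or.inl ⟨q, Or.inl h⟩)
    · exact Or.inr h.2
    · exact Or.inl (Or.inl ⟨q, Or.inr h⟩)
    · obtain ⟨h1, h2⟩ := h
      simp only [Set.mem_setOf_eq] at h1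
      subst h1
      exact Or.inr h2
    · exact Or.inl (Or.inr hp)
  -- transitive closure facts
  have htc1 : tcS R ⊆ tcS Rl := by
    intro pq h
    exact Relation.TransGen.mono (fun a b hab => Or.inl hab) _ _ h
  have htc2 : ∀ p q : Sym2 V, (p, q) ∈ tcS Rl →
      (p, q) ∈ tcS R ∨ (p = q ∧ p ∈ suppS F) := by
    intro p q h
    simp only [tcS, Set.mem_setOf_eq] at h ⊢
    induction h with
    | single h =>
      rcases h with h | ⟨h1, h2⟩
      · exact Or.inl (Relation.TransGen.single h)
      · simp only [Set.mem_setOf_eq] at h1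
        exact Or.inr ⟨h1, h2⟩
    | tail hab hbc ih =>
      rcases hbc with hbc | ⟨h1, h2⟩
      · rcases ih with ih | ⟨rfl, _⟩
        · exact Or.inl (Relation.TransGen.tail ih hbc)
        · exact Or.inl (Relation.TransGen.single hbc)
      · simp only [Set.mem_setOf_eq] at h1
        subst h1
        exact ih
  constructor
  · rintro ⟨⟨hdef, hI⟩, hFl⟩
    refine ⟨⟨?_, ?_⟩, ?_⟩
    · intro p hp
      rcases hsuppPlus' hp with hp | hp
      · exact hdef p hp
      · obtain ⟨q, hq | hq⟩ := hp
        · exact (hFl p q hq).1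
        · exact (hFl q p hq).2.1
    · rintro p q (hpq | ⟨h1, h2⟩)
      · refine ⟨fun hn => ?_, fun hy => ?_⟩
        · exact (hI p q hpq).1 (fun hc => hn (htc1 hc))
        · rcases htc2 q p hy with hy | ⟨heq, hf⟩
          · exact (hI p q hpq).2 hy
          · obtain ⟨u, hu⟩ := hdef p (Or.inl ⟨q, Or.inl hpq⟩)
            exact ⟨u, hu, by rw [heq]; exact hu⟩
      · simp only [Set.mem_setOf_eq] at h1
        subst h1
        refine ⟨fun hn => absurd ?_ hn, fun _ => ?_⟩
        · exact Relation.TransGen.single (Or.inr ⟨rfl, h2⟩)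
        · obtain ⟨q', hq'⟩ := h2
          have hdp : lcaDef E p := by
            rcases hq' with h | h
            · exact (hFl p q' h).1
            · exact (hFl q' p h).2.1
          obtain ⟨u, hu⟩ := hdp
          exact ⟨u, hu, hu⟩
    · intro p q hpq u v hu hv
      exact (hFl p q hpq).2.2 u v hu hv
  · rintro ⟨⟨hdef, hI⟩, hcF⟩
    refine ⟨⟨?_, ?_⟩, ?_⟩
    · intro p hp
      exact hdef p (hsuppPlus hp)
    · intro p q hpq
      refine ⟨fun hn => ?_, fun hy => ?_⟩
      · refine (hI p q (Or.inl hpq)).1 (fun hc => ?_)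
        rcases htc2 q p hc with hc | ⟨rfl, _⟩
        · exact hn hc
        · exact hn (Relation.TransGen.single hpq)
      · exact (hI p q (Or.inl hpq)).2 (htc1 hy)
    · intro p q hpq
      have hp : lcaDef E p := hdef p (Or.inl (hsuppF ⟨q, Or.inl hpq⟩))
      have hq : lcaDef E q := hdef q (Or.inl (hsuppF ⟨p, Or.inr hpq⟩))
      exact ⟨hp, hq, fun u v hu hv => hcF p q hpq u v hu hv⟩
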